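/- In the MinBox(n, D, α, b) Maker-Breaker game, if Maker always claims a free element from a free active box with maximal danger value, then throughout the game every active box F satisfies danger(F) ≤ b(ln n + 1). -/

import Mathlib

namespace MinBox

variable {α : Type*} [DecidableEq α]

/-- The box `i` is free: it still has an unclaimed element (w.r.t. Maker's set `M` and
Breaker's set `B`). -/
def Free {n : ℕ} (boxes : Fin n → Finset α) (M B : Finset α) (i : Fin n) : Prop :=
  (boxes i \ (M ∪ B)).Nonempty

/-- The box `i` is active: Maker owns fewer than `a·|Fᵢ|` of its elements. -/
def Active {n : ℕ} (a : ℝ) (boxes : Fin n → Finset α) (M : Finset α) (i : Fin n) : Prop :=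
  ((M ∩ boxes i).card : ℝ) < a * ((boxes i).card : ℝ)

/-- The danger value `danger(Fᵢ) = w_B(Fᵢ) − b·w_M(Fᵢ)` of the box `i`. -/
def danger {n : ℕ} (b : ℕ) (boxes : Fin n → Finset α) (M B : Finset α) (i : Fin n) : ℝ :=
  ((B ∩ boxes i).card : ℝ) - (b : ℝ) * ((M ∩ boxes i).card : ℝ)

end MinBox

/-- In the `MinBox(n, D, a, b)` game, if Maker always claims a free
element from a free active box of maximal danger, then throughout the game every active
box `F` satisfies `danger(F) ≤ b(ln n + 1)`.  A play is modelled by the increasing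
sequences `M t`, `B t` of the players' elements: in round `t` Breaker first claims at
most `b` unclaimed elements, then Maker claims one element according to the above rule
(skipping his move if no free active box exists).  The danger bound holds both after
Breaker's move and after Maker's move of every round. -/
theorem minBox_danger_bound {α : Type*} [DecidableEq α]
    (n D b : ℕ) (hn : 0 < n) (hD : 0 < D) (hb : 0 < b)
    (a : ℝ) (ha0 : 0 < a) (ha1 : a < 1)
    (boxes : Fin n → Finset α)
    (hdisj : ∀ i j, i ≠ j → Disjoint (boxes i) (boxes j))
    (hsize : ∀ i, D ≤ (boxes i).card)
    (M B : ℕ → Finset α)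
    (hM0 : M 0 = ∅) (hB0 : B 0 = ∅)
    (hMboard : ∀ t, ∀ x ∈ M t, ∃ i, x ∈ boxes i)
    (hBboard : ∀ t, ∀ x ∈ B t, ∃ i, x ∈ boxes i)
    (hMB : ∀ t, Disjoint (M t) (B t))
    (hBmono : ∀ t, B t ⊆ B (t + 1))
    (hBbias : ∀ t, (B (t + 1) \ B t).card ≤ b)
    (hBnew : ∀ t, Disjoint (B (t + 1) \ B t) (M t))
    (hMakerMove : ∀ t,
      (∃ i, MinBox.Free boxes (M t) (B (t + 1)) i ∧ MinBox.Active a boxes (M t) i) →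
      ∃ i x, MinBox.Free boxes (M t) (B (t + 1)) i ∧ MinBox.Active a boxes (M t) i ∧
        (∀ j, MinBox.Free boxes (M t) (B (t + 1)) j →
          MinBox.Active a boxes (M t) j →
          MinBox.danger b boxes (M t) (B (t + 1)) j ≤
            MinBox.danger b boxes (M t) (B (t + 1)) i) ∧
        x ∈ boxes i \ (M t ∪ B (t + 1)) ∧ M (t + 1) = insert x (M t))
    (hMakerSkip : ∀ t,
      (¬ ∃ i, MinBox.Free boxes (M t) (B (t + 1)) i ∧ MinBox.Active a boxes (M t) i) →
      M (t + 1) = M t) :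
    ∀ t i,
      (MinBox.Active a boxes (M t) i →
        MinBox.danger b boxes (M t) (B t) i ≤ (b : ℝ) * (Real.log n + 1)) ∧
      (MinBox.Active a boxes (M t) i →
        MinBox.danger b boxes (M t) (B (t + 1)) i ≤ (b : ℝ) * (Real.log n + 1)) := by
  classical
  -- ## basic monotonicity of Maker's and Breaker's sets
  have hMstep : ∀ t, M t ⊆ M (t + 1) := by
    intro t
    by_cases h : ∃ i, MinBox.Free boxes (M t) (B (t + 1)) i ∧ MinBox.Active a boxes (M t) i
    · obtain ⟨i, x, -, -, -, -, hM1⟩ := hMakerMove t h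
      rw [hM1]; exact Finset.subset_insert _ _
    · rw [hMakerSkip t h]
  have hMle : ∀ s t : ℕ, s ≤ t → M s ⊆ M t := by
    intro s t h
    induction h with
    | refl => exact subset_rfl
    | step _ ih => exact ih.trans (hMstep _)
  -- ## monotonicity of Free and Active
  have hFreeMono : ∀ {M₁ M₂ B₁ B₂ : Finset α} {i}, M₁ ⊆ M₂ → B₁ ⊆ B₂ →
      MinBox.Free boxes M₂ B₂ i → MinBox.Free boxes M₁ B₁ i := by
    intro M₁ M₂ B₁ B₂ i hM hB h
    obtain ⟨y, hy⟩ := h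
    simp only [Finset.mem_sdiff, Finset.mem_union, not_or] at hy
    exact ⟨y, by
      simp only [Finset.mem_sdiff, Finset.mem_union, not_or]
      exact ⟨hy.1, fun h' => hy.2.1 (hM h'), fun h' => hy.2.2 (hB h')⟩⟩
  have hActiveMono : ∀ {M₁ M₂ : Finset α} {i}, M₁ ⊆ M₂ →
      MinBox.Active a boxes M₂ i → MinBox.Active a boxes M₁ i := by
    intro M₁ M₂ i hM h
    unfold MinBox.Active at *
    have h1 : (M₁ ∩ boxes i).card ≤ (M₂ ∩ boxes i).card :=
      Finset.card_le_card (Finset.inter_subset_inter hM subset_rfl)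
    have h2 := (Nat.cast_le (α := ℝ)).mpr h1
    linarith
  -- ## sums of intersections with disjoint boxes
  have hsum_inter : ∀ (X : Finset α) (S : Finset (Fin n)),
      ∑ i ∈ S, (X ∩ boxes i).card ≤ X.card := by
    intro X S
    rw [← Finset.card_biUnion (fun i _ j _ hij =>
      (hdisj i j hij).mono Finset.inter_subset_right Finset.inter_subset_right)]
    apply Finset.card_le_card
    intro y hy
    simp only [Finset.mem_biUnion, Finset.mem_inter] at hy
    obtain ⟨i, -, hy1, -⟩ := hy
    exact hy1
  have hBsplit : ∀ t i, B (t + 1) ∩ boxes i = (B t ∩ boxes i) ∪ ((B (t + 1) \ B t) ∩ boxes i) := by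
    intro t i
    rw [← Finset.union_inter_distrib_right, Finset.union_sdiff_of_subset (hBmono t)]
  have hBcard : ∀ t (S : Finset (Fin n)),
      ∑ i ∈ S, ((B (t + 1) ∩ boxes i).card : ℝ) ≤ (∑ i ∈ S, ((B t ∩ boxes i).card : ℝ)) + b := by
    intro t S
    have h1 : ∀ i, ((B (t + 1) ∩ boxes i).card : ℝ) ≤
        ((B t ∩ boxes i).card : ℝ) + (((B (t + 1) \ B t) ∩ boxes i).card : ℝ) := by
      intro i
      rw [hBsplit t i]
      exact_mod_cast Finset.card_union_le _ _
    calc ∑ i ∈ S, ((B (t + 1) ∩ boxes i).card : ℝ)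
        ≤ ∑ i ∈ S, (((B t ∩ boxes i).card : ℝ) + (((B (t + 1) \ B t) ∩ boxes i).card : ℝ)) :=
          Finset.sum_le_sum fun i _ => h1 i
      _ = (∑ i ∈ S, ((B t ∩ boxes i).card : ℝ))
            + ∑ i ∈ S, (((B (t + 1) \ B t) ∩ boxes i).card : ℝ) := Finset.sum_add_distrib
      _ ≤ (∑ i ∈ S, ((B t ∩ boxes i).card : ℝ)) + b := by
          have h2 := hsum_inter (B (t + 1) \ B t) S
          have h3 := hBbias t
          have : (∑ i ∈ S, (((B (t + 1) \ B t) ∩ boxes i).card : ℝ)) ≤ (b : ℝ) := by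
            rw [← Nat.cast_sum]
            exact_mod_cast le_trans h2 h3
          linarith
  have hBone : ∀ t i, ((B (t + 1) ∩ boxes i).card : ℝ) ≤ ((B t ∩ boxes i).card : ℝ) + b := by
    intro t i
    have := hBcard t {i}
    simpa using this
  -- ## frozen boxes never change
  have hfrozenB : ∀ t i, boxes i ⊆ M t ∪ B t → B (t + 1) ∩ boxes i = B t ∩ boxes i := by
    intro t i hsub
    rw [hBsplit t i]
    suffices h : (B (t + 1) \ B t) ∩ boxes i = ∅ by rw [h, Finset.union_empty]
    rw [Finset.eq_empty_iff_forall_notMem]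
    intro y hy
    simp only [Finset.mem_inter, Finset.mem_sdiff] at hy
    obtain ⟨⟨hy1, hy2⟩, hy3⟩ := hy
    have hM : y ∉ M t := Finset.disjoint_left.mp (hBnew t) (Finset.mem_sdiff.mpr ⟨hy1, hy2⟩)
    have := hsub hy3
    simp only [Finset.mem_union] at this
    tauto
  -- ## Maker's move changes cards by an indicator
  have hMcard : ∀ t m x, x ∈ boxes m \ (M t ∪ B (t + 1)) → M (t + 1) = insert x (M t) → ∀ i,
      ((M (t + 1) ∩ boxes i).card : ℝ)
        = ((M t ∩ boxes i).card : ℝ) + (if i = m then 1 else 0) := by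
    intro t m x hx hM1 i
    simp only [Finset.mem_sdiff, Finset.mem_union, not_or] at hx
    obtain ⟨hxm, hxM, hxB⟩ := hx
    by_cases him : i = m
    · subst him
      rw [hM1, Finset.insert_inter_of_mem hxm,
        Finset.card_insert_of_notMem (fun h => hxM (Finset.mem_inter.mp h).1)]
      push_cast
      simp
    · rw [hM1, Finset.insert_inter_of_notMem
        (fun hxi => (Finset.disjoint_left.mp (hdisj i m him) hxi) hxm)]
      simp [him]
  have hDrop : ∀ t m x, x ∈ boxes m \ (M t ∪ B (t + 1)) → M (t + 1) = insert x (M t) → ∀ i,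
      MinBox.danger b boxes (M (t + 1)) (B (t + 1)) i
        = MinBox.danger b boxes (M t) (B (t + 1)) i - (if i = m then (b : ℝ) else 0) := by
    intro t m x hx hM1 i
    unfold MinBox.danger
    rw [hMcard t m x hx hM1 i]
    by_cases him : i = m <;> simp [him] <;> ring
  -- ## the weight function φ k = b k Σ_{j=k}^n 1/j
  have hn1 : 1 ≤ n := hn
  have hSn_split : ∀ k, 1 ≤ k → k ≤ n →
      ∑ j ∈ Finset.Icc k n, ((j : ℝ))⁻¹
        = ((k : ℝ))⁻¹ + ∑ j ∈ Finset.Icc (k + 1) n, ((j : ℝ))⁻¹ := by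
    intro k _ hkn
    have h1 : Finset.Icc k n = insert k (Finset.Icc (k + 1) n) := by
      rw [Finset.Icc_add_one_left_eq_Ioc, Finset.Ioc_insert_left hkn]
    rw [h1, Finset.sum_insert (by simp)]
  have hφ_base : ∀ k, 1 ≤ k → k ≤ n →
      (b : ℝ) ≤ (b : ℝ) * k * ∑ j ∈ Finset.Icc k n, ((j : ℝ))⁻¹ := by
    intro k hk1 hkn
    have hn0 : (0 : ℝ) < n := by exact_mod_cast hn
    have hterm : ∀ j ∈ Finset.Icc k n, ((n : ℝ))⁻¹ ≤ ((j : ℝ))⁻¹ := by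
      intro j hj
      simp only [Finset.mem_Icc] at hj
      have hj0 : (0 : ℝ) < j := by
        have : 1 ≤ j := le_trans hk1 hj.1
        exact_mod_cast this
      exact inv_anti₀ hj0 (by exact_mod_cast hj.2)
    have hs : ((Finset.Icc k n).card : ℝ) * ((n : ℝ))⁻¹
        ≤ ∑ j ∈ Finset.Icc k n, ((j : ℝ))⁻¹ := by
      have := Finset.card_nsmul_le_sum (Finset.Icc k n) (fun j => ((j : ℝ))⁻¹) _ hterm
      simpa [nsmul_eq_mul] using this
    rw [Nat.card_Icc] at hs
    have hkey : n ≤ k * (n + 1 - k) := by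
      have h2 : n + 1 - k = n - k + 1 := by omega
      rw [h2, Nat.mul_add, Nat.mul_one]
      have := Nat.le_mul_of_pos_left (n - k) hk1
      omega
    have hkeyR : (n : ℝ) ≤ (k : ℝ) * ((n + 1 - k : ℕ) : ℝ) := by exact_mod_cast hkey
    have h3 : (1 : ℝ) ≤ (k : ℝ) * (((n + 1 - k : ℕ) : ℝ) * ((n : ℝ))⁻¹) := by
      rw [← mul_assoc]
      calc (1 : ℝ) = (n : ℝ) * ((n : ℝ))⁻¹ := by rw [mul_inv_cancel₀ hn0.ne']
        _ ≤ (k : ℝ) * ((n + 1 - k : ℕ) : ℝ) * ((n : ℝ))⁻¹ := by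
            apply mul_le_mul_of_nonneg_right hkeyR (by positivity)
    have h4 : (1 : ℝ) ≤ (k : ℝ) * ∑ j ∈ Finset.Icc k n, ((j : ℝ))⁻¹ := by
      refine h3.trans ?_
      apply mul_le_mul_of_nonneg_left hs (Nat.cast_nonneg k)
    calc (b : ℝ) = (b : ℝ) * 1 := by ring
      _ ≤ (b : ℝ) * ((k : ℝ) * ∑ j ∈ Finset.Icc k n, ((j : ℝ))⁻¹) :=
          mul_le_mul_of_nonneg_left h4 (Nat.cast_nonneg b)
      _ = (b : ℝ) * k * ∑ j ∈ Finset.Icc k n, ((j : ℝ))⁻¹ := by ring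
  have hφ_rec : ∀ k : ℕ, 1 ≤ k → k ≤ n →
      (k : ℝ) * ((b : ℝ) * ((k + 1 : ℕ) : ℝ) * ∑ j ∈ Finset.Icc (k + 1) n, ((j : ℝ))⁻¹)
        = ((k + 1 : ℕ) : ℝ)
            * ((b : ℝ) * k * (∑ j ∈ Finset.Icc k n, ((j : ℝ))⁻¹) - b) := by
    intro k hk1 hkn
    rw [hSn_split k hk1 hkn]
    have hk0 : ((k : ℝ)) ≠ 0 := Nat.cast_ne_zero.mpr (by omega)
    push_cast
    field_simp
    ring
  -- ## the main invariant on sums of dangers over subsets of the pool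
  have hInv : ∀ t (S : Finset (Fin n)), S.Nonempty →
      (∀ i ∈ S, MinBox.Free boxes (M t) (B t) i ∧ MinBox.Active a boxes (M t) i) →
      ∑ i ∈ S, MinBox.danger b boxes (M t) (B (t + 1)) i
        ≤ (b : ℝ) * (S.card : ℝ) * ∑ j ∈ Finset.Icc S.card n, ((j : ℝ))⁻¹ := by
    intro t
    induction t with
    | zero =>
      intro S hSne _
      have hcard1 : 1 ≤ S.card := Finset.card_pos.mpr hSne
      have hcardn : S.card ≤ n := le_trans (Finset.card_le_univ S) (by simp)
      have h0 : ∑ i ∈ S, MinBox.danger b boxes (M 0) (B (0 + 1)) i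
          = ∑ i ∈ S, ((B 1 ∩ boxes i).card : ℝ) := by
        apply Finset.sum_congr rfl
        intro i _
        unfold MinBox.danger
        simp [hM0]
      rw [h0]
      have h1 : ∑ i ∈ S, ((B 1 ∩ boxes i).card : ℝ) ≤ (b : ℝ) := by
        rw [← Nat.cast_sum]
        have h2 := hsum_inter (B 1) S
        have h3 : (B 1).card ≤ b := by
          have := hBbias 0
          rwa [hB0, Finset.sdiff_empty] at this
        exact_mod_cast le_trans h2 h3
      exact h1.trans (hφ_base S.card hcard1 hcardn)
    | succ u IH =>
      intro S hSne hSP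
      have hcard1 : 1 ≤ S.card := Finset.card_pos.mpr hSne
      have hbreak : ∑ i ∈ S, MinBox.danger b boxes (M (u + 1)) (B (u + 1 + 1)) i
          ≤ (∑ i ∈ S, MinBox.danger b boxes (M (u + 1)) (B (u + 1)) i) + b := by
        unfold MinBox.danger
        rw [Finset.sum_sub_distrib, Finset.sum_sub_distrib]
        have := hBcard (u + 1) S
        linarith
      by_cases hex : ∃ i, MinBox.Free boxes (M u) (B (u + 1)) i ∧ MinBox.Active a boxes (M u) i
      · obtain ⟨m, x, hmfree, hmact, hmax, hx, hM1⟩ := hMakerMove u hex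
        have hSp : ∀ i ∈ S,
            MinBox.Free boxes (M u) (B (u + 1)) i ∧ MinBox.Active a boxes (M u) i := by
          intro i hiS
          obtain ⟨hfree, hact⟩ := hSP i hiS
          exact ⟨hFreeMono (hMstep u) subset_rfl hfree, hActiveMono (hMstep u) hact⟩
        have hSpool : ∀ i ∈ S,
            MinBox.Free boxes (M u) (B u) i ∧ MinBox.Active a boxes (M u) i := by
          intro i hiS
          exact ⟨hFreeMono subset_rfl (hBmono u) (hSp i hiS).1, (hSp i hiS).2⟩
        have hmpool : MinBox.Free boxes (M u) (B u) m ∧ MinBox.Active a boxes (M u) m :=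
          ⟨hFreeMono subset_rfl (hBmono u) hmfree, hmact⟩
        have hgi := hDrop u m x hx hM1
        by_cases hmS : m ∈ S
        · have h1 : ∑ i ∈ S, MinBox.danger b boxes (M (u + 1)) (B (u + 1)) i
              = (∑ i ∈ S, MinBox.danger b boxes (M u) (B (u + 1)) i) - b := by
            rw [Finset.sum_congr rfl (fun i _ => hgi i), Finset.sum_sub_distrib,
              Finset.sum_ite_eq' S m (fun _ => (b : ℝ)), if_pos hmS]
          have h2 := IH S hSne hSpool
          linarith
        · -- m ∉ S : use domination by the maximal box m
          have h1 : ∑ i ∈ S, MinBox.danger b boxes (M (u + 1)) (B (u + 1)) i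
              = ∑ i ∈ S, MinBox.danger b boxes (M u) (B (u + 1)) i := by
            apply Finset.sum_congr rfl
            intro i hiS
            rw [hgi i, if_neg (show ¬ i = m from fun h => hmS (h ▸ hiS)), sub_zero]
          have hA : ∑ i ∈ S, MinBox.danger b boxes (M u) (B (u + 1)) i
              ≤ (S.card : ℝ) * MinBox.danger b boxes (M u) (B (u + 1)) m := by
            have := Finset.sum_le_card_nsmul S (fun i => MinBox.danger b boxes (M u) (B (u + 1)) i)
              (MinBox.danger b boxes (M u) (B (u + 1)) m)
              (fun i hiS => hmax i (hSp i hiS).1 (hSp i hiS).2)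
            simpa [nsmul_eq_mul] using this
          have hck : (insert m S).card = S.card + 1 := Finset.card_insert_of_notMem hmS
          have hkn1 : S.card + 1 ≤ n := by
            have := le_trans (Finset.card_le_univ (insert m S)) (by simp : (Finset.univ : Finset (Fin n)).card ≤ n)
            omega
          have hT := IH (insert m S) (Finset.insert_nonempty m S)
            (by
              intro i hiT
              rcases Finset.mem_insert.mp hiT with h | h
              · exact h ▸ hmpool
              · exact hSpool i h)
          rw [Finset.sum_insert hmS, hck] at hT
          have hrec := hφ_rec S.card hcard1 (by omega)
          have hposk : (0 : ℝ) < ((S.card + 1 : ℕ) : ℝ) := by positivity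
          have h5 : (S.card : ℝ) * (MinBox.danger b boxes (M u) (B (u + 1)) m
                + ∑ i ∈ S, MinBox.danger b boxes (M u) (B (u + 1)) i)
              ≤ (S.card : ℝ) * ((b : ℝ) * ((S.card + 1 : ℕ) : ℝ)
                * ∑ j ∈ Finset.Icc (S.card + 1) n, ((j : ℝ))⁻¹) :=
            mul_le_mul_of_nonneg_left hT (Nat.cast_nonneg _)
          have h6 : ((S.card + 1 : ℕ) : ℝ) * (∑ i ∈ S, MinBox.danger b boxes (M u) (B (u + 1)) i)
              ≤ ((S.card + 1 : ℕ) : ℝ)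
                * ((b : ℝ) * (S.card : ℝ) * (∑ j ∈ Finset.Icc S.card n, ((j : ℝ))⁻¹) - b) := by
            have e1 : ((S.card + 1 : ℕ) : ℝ) = (S.card : ℝ) + 1 := by push_cast; ring
            have e2 : (S.card : ℝ) * (MinBox.danger b boxes (M u) (B (u + 1)) m
                + ∑ i ∈ S, MinBox.danger b boxes (M u) (B (u + 1)) i)
                = (S.card : ℝ) * MinBox.danger b boxes (M u) (B (u + 1)) m
                  + (S.card : ℝ) * ∑ i ∈ S, MinBox.danger b boxes (M u) (B (u + 1)) i := by ring
            rw [e1]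
            rw [e1] at hrec h5
            nlinarith [hA, h5, hrec]
          have h7 := (mul_le_mul_iff_right₀ hposk).mp h6
          linarith
      · -- Maker skipped: S must be empty, contradiction
        exfalso
        obtain ⟨i, hiS⟩ := hSne
        obtain ⟨hfree, hact⟩ := hSP i hiS
        rw [hMakerSkip u hex] at hfree hact
        exact hex ⟨i, hfree, hact⟩
  -- ## the decision-time bound for free active boxes
  have hDec : ∀ t i, MinBox.Free boxes (M t) (B (t + 1)) i → MinBox.Active a boxes (M t) i →
      MinBox.danger b boxes (M t) (B (t + 1)) i
        ≤ (b : ℝ) * ∑ j ∈ Finset.Icc 1 n, ((j : ℝ))⁻¹ := by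
    intro t i hf ha'
    have h1 := hInv t {i} (Finset.singleton_nonempty i)
      (by
        intro j hj
        rw [Finset.mem_singleton] at hj
        subst hj
        exact ⟨hFreeMono subset_rfl (hBmono t) hf, ha'⟩)
    simpa using h1
  -- ## the post-move bound for free active boxes
  have hPost : ∀ t i, MinBox.Free boxes (M t) (B t) i → MinBox.Active a boxes (M t) i →
      MinBox.danger b boxes (M t) (B t) i
        ≤ (b : ℝ) * (∑ j ∈ Finset.Icc 1 n, ((j : ℝ))⁻¹) - b := by
    intro t i hf ha'
    match t with
    | 0 =>
      have h0 : MinBox.danger b boxes (M 0) (B 0) i = 0 := by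
        unfold MinBox.danger
        simp [hM0, hB0]
      rw [h0]
      have := hφ_base 1 le_rfl hn1
      simp only [Nat.cast_one, mul_one] at this
      linarith
    | u + 1 =>
      by_cases hex : ∃ j, MinBox.Free boxes (M u) (B (u + 1)) j ∧ MinBox.Active a boxes (M u) j
      · obtain ⟨m, x, hmfree, hmact, hmax, hx, hM1⟩ := hMakerMove u hex
        have hgi := hDrop u m x hx hM1 i
        by_cases him : i = m
        · subst him
          rw [hgi, if_pos rfl]
          have := hDec u i hmfree hmact
          linarith
        · have hif : MinBox.Free boxes (M u) (B (u + 1)) i :=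
            hFreeMono (hMstep u) subset_rfl hf
          have hia : MinBox.Active a boxes (M u) i := hActiveMono (hMstep u) ha'
          have hle : MinBox.danger b boxes (M u) (B (u + 1)) i
              ≤ MinBox.danger b boxes (M u) (B (u + 1)) m := hmax i hif hia
          have hpair := hInv u {i, m}
            (Finset.insert_nonempty i {m})
            (by
              intro j hj
              rcases Finset.mem_insert.mp hj with h | h
              · subst h
                exact ⟨hFreeMono subset_rfl (hBmono u) hif, hia⟩
              · rw [Finset.mem_singleton] at h
                subst h
                exact ⟨hFreeMono subset_rfl (hBmono u) hmfree, hmact⟩)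
          rw [Finset.sum_pair him, Finset.card_pair him] at hpair
          have hrec := hφ_rec 1 le_rfl hn1
          norm_num at hrec hpair
          rw [hgi, if_neg him, sub_zero]
          nlinarith [hle, hpair, hrec]
      · exfalso
        have hmeq := hMakerSkip u hex
        rw [hmeq] at hf ha'
        exact hex ⟨i, hf, ha'⟩
  -- ## main claim: decision-time bound for ALL active boxes
  have hC2 : ∀ t i, MinBox.Active a boxes (M t) i →
      MinBox.danger b boxes (M t) (B (t + 1)) i
        ≤ (b : ℝ) * ∑ j ∈ Finset.Icc 1 n, ((j : ℝ))⁻¹ := by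
    intro t
    induction t with
    | zero =>
      intro i ha'
      by_cases hfree : MinBox.Free boxes (M 0) (B (0 + 1)) i
      · exact hDec 0 i hfree ha'
      · -- the box is nonempty, hence free at the initial position
        have hf0 : MinBox.Free boxes (M 0) (B 0) i := by
          obtain ⟨y, hy⟩ := Finset.card_pos.mp (lt_of_lt_of_le hD (hsize i))
          exact ⟨y, by simp [hM0, hB0, hy]⟩
        have h1 := hPost 0 i hf0 ha'
        have h2 := hBone 0 i
        unfold MinBox.danger at h1 ⊢
        linarith
    | succ u IH =>
      intro i ha'
      by_cases hfree : MinBox.Free boxes (M (u + 1)) (B (u + 1 + 1)) i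
      · exact hDec (u + 1) i hfree ha'
      · by_cases hfree2 : MinBox.Free boxes (M (u + 1)) (B (u + 1)) i
        · -- Breaker filled the box during round u+1: post bound + b
          have h1 := hPost (u + 1) i hfree2 ha'
          have h2 := hBone (u + 1) i
          unfold MinBox.danger at h1 ⊢
          linarith
        · -- the box was already full at (M (u+1), B (u+1)): danger is frozen
          have hsub : boxes i ⊆ M (u + 1) ∪ B (u + 1) := by
            unfold MinBox.Free at hfree2
            rw [Finset.not_nonempty_iff_eq_empty, Finset.sdiff_eq_empty_iff_subset] at hfree2
            exact hfree2
          have hBfr : B (u + 1 + 1) ∩ boxes i = B (u + 1) ∩ boxes i := hfrozenB (u + 1) i hsub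
          have heq1 : MinBox.danger b boxes (M (u + 1)) (B (u + 1 + 1)) i
              = MinBox.danger b boxes (M (u + 1)) (B (u + 1)) i := by
            unfold MinBox.danger
            rw [hBfr]
          rw [heq1]
          by_cases hex : ∃ j, MinBox.Free boxes (M u) (B (u + 1)) j
              ∧ MinBox.Active a boxes (M u) j
          · obtain ⟨m, x, hmfree, hmact, hmax, hx, hM1⟩ := hMakerMove u hex
            have hgi := hDrop u m x hx hM1 i
            by_cases him : i = m
            · subst him
              rw [hgi, if_pos rfl]
              have h3 := hDec u i hmfree hmact
              have hb0 : (0 : ℝ) ≤ (b : ℝ) := Nat.cast_nonneg b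
              linarith
            · rw [hgi, if_neg him, sub_zero]
              exact IH i (hActiveMono (hMstep u) ha')
          · have hmeq := hMakerSkip u hex
            rw [hmeq]
            exact IH i (by rw [hmeq] at ha'; exact ha')
  -- ## wrap up: harmonic sum ≤ log n + 1 and post-state monotonicity
  have hH : (b : ℝ) * (∑ j ∈ Finset.Icc 1 n, ((j : ℝ))⁻¹) ≤ (b : ℝ) * (Real.log n + 1) := by
    have h1 : (∑ j ∈ Finset.Icc 1 n, ((j : ℝ))⁻¹) = ((harmonic n : ℚ) : ℝ) := by
      simp only [harmonic_eq_sum_Icc, Rat.cast_sum, Rat.cast_inv, Rat.cast_natCast]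
    have h2 := harmonic_le_one_add_log n
    rw [h1]
    apply mul_le_mul_of_nonneg_left _ (Nat.cast_nonneg b)
    linarith
  intro t i
  have hmain : MinBox.Active a boxes (M t) i →
      MinBox.danger b boxes (M t) (B (t + 1)) i ≤ (b : ℝ) * (Real.log n + 1) :=
    fun ha' => le_trans (hC2 t i ha') hH
  constructor
  · intro ha'
    have h1 := hmain ha'
    have h2 : MinBox.danger b boxes (M t) (B t) i
        ≤ MinBox.danger b boxes (M t) (B (t + 1)) i := by
      unfold MinBox.danger
      have : ((B t ∩ boxes i).card : ℝ) ≤ ((B (t + 1) ∩ boxes i).card : ℝ) := by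
        exact_mod_cast Finset.card_le_card (Finset.inter_subset_inter (hBmono t) subset_rfl)
      linarith
    linarith
  · exact hmain
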